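/- Let r > 0, let g ∈ W, and let F : ℂ → ℂ be continuous on the circle {z ∈ ℂ : |z| = r}. Define f : (0,∞) → ℂ by f(t) = (1/(2πi))·∫_0^{2π} (r·e^{iθ})^{-2}·e^{t/(r·e^{iθ})}·F(r·e^{iθ})·i·r·e^{iθ} dθ. Then for every x ∈ [a,b]: ∫_a^x f(x−t)·g(t) dt = (1/(2πi))·∫_0^{2π} F(r·e^{iθ})·[ ((r·e^{iθ}·id − 𝒥)^{-1} g)(x) − g(x)/(r·e^{iθ}) ]·i·r·e^{iθ} dθ. -/

import Mathlib

open MeasureTheory intervalIntegral Complex Set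

lemma volterra_uniq {a b : ℝ} {z : ℂ} (hz : z ≠ 0) {u : ℝ → ℂ} (hu : Continuous u)
    (heq : ∀ x ∈ Set.Icc a b, z * u x = ∫ t in a..x, u t) :
    ∀ x ∈ Set.Icc a b, u x = 0 := by
  obtain ⟨C, hC0, hC⟩ : ∃ C, 0 ≤ C ∧ ∀ t ∈ Set.Icc a b, ‖u t‖ ≤ C := by
    obtain ⟨C, hC⟩ := (isCompact_Icc (a := a) (b := b)).exists_bound_of_continuousOn
      hu.continuousOn
    exact ⟨max C 0, le_max_right _ _, fun t ht => (hC t ht).trans (le_max_left _ _)⟩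
  have hzn : (0:ℝ) < ‖z‖ := norm_pos_iff.mpr hz
  have key : ∀ n : ℕ, ∀ x ∈ Set.Icc a b, ‖u x‖ ≤ C * ((x - a)/‖z‖)^n / n.factorial := by
    intro n
    induction n with
    | zero => intro x hx; simpa using hC x hx
    | succ n ih =>
      intro x hx
      have hax : a ≤ x := hx.1
      have hb : ∀ t ∈ Set.Icc a x, ‖u t‖ ≤ C * ((t - a)/‖z‖)^n / n.factorial := fun t ht =>
        ih t ⟨ht.1, ht.2.trans hx.2⟩
      have hint : IntervalIntegrable (fun t => C * ((t - a)/‖z‖)^n / n.factorial) volume a x :=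
        (Continuous.div_const (by continuity) _).intervalIntegrable a x
      have h1 : ‖z * u x‖ ≤ ∫ t in a..x, C * ((t - a)/‖z‖)^n / n.factorial := by
        rw [heq x hx]
        refine (intervalIntegral.norm_integral_le_integral_norm hax).trans ?_
        exact intervalIntegral.integral_mono_on hax (hu.norm.intervalIntegrable a x) hint hb
      have h2 : (∫ t in a..x, C * ((t - a)/‖z‖)^n / n.factorial)
          = C * ((x - a)/‖z‖)^(n+1) / (n+1).factorial * ‖z‖ := by
        have e1 : (fun t => C * ((t - a)/‖z‖)^n / n.factorial)
            = fun t => (C / (‖z‖^n * n.factorial)) * (t - a)^n := by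
          funext t; field_simp
          rw [div_pow, mul_assoc, div_mul_cancel₀ _ (pow_ne_zero n hzn.ne')]
        rw [e1, intervalIntegral.integral_const_mul]
        have e2 : ∫ t in a..x, (t - a)^n = (x - a)^(n+1)/(n+1) := by
          rw [intervalIntegral.integral_comp_sub_right (fun t => t ^ n) a]
          simp [integral_pow]
        rw [e2]
        have hf : (n.factorial : ℝ) ≠ 0 := Nat.cast_ne_zero.mpr n.factorial_ne_zero
        have hn1 : ((n:ℝ)+1) ≠ 0 := by positivity
        have hw : ‖z‖ ≠ 0 := hzn.ne'
        rw [div_pow, pow_succ]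
        push_cast [Nat.factorial_succ]
        field_simp [hw, hf, hn1]
        ring
      have h3 : ‖u x‖ * ‖z‖ ≤ C * ((x - a)/‖z‖)^(n+1) / (n+1).factorial * ‖z‖ := by
        calc ‖u x‖ * ‖z‖ = ‖z * u x‖ := by rw [norm_mul, mul_comm]
          _ ≤ _ := h1.trans h2.le
      have h4 := (le_div_iff₀ hzn).mpr h3
      rwa [mul_div_cancel_right₀ _ hzn.ne'] at h4
  intro x hx
  have hlim : Filter.Tendsto (fun n : ℕ => C * ((x - a)/‖z‖)^n / n.factorial)
      Filter.atTop (nhds 0) := by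
    have h := (FloorSemiring.tendsto_pow_div_factorial_atTop ((x - a)/‖z‖)).const_mul C
    simpa [mul_div_assoc] using h
  have h0 : ‖u x‖ ≤ 0 :=
    le_of_tendsto_of_tendsto' tendsto_const_nhds hlim (fun n => key n x hx)
  exact norm_le_zero_iff.mp h0


lemma volterra_key (a x : ℝ) {z : ℂ} (hz : z ≠ 0) {gc : ℝ → ℂ} (hgc : Continuous gc) :
    ∫ s in a..x, Complex.exp ((s:ℂ)/z) * (∫ t in a..s, Complex.exp (-(t:ℂ)/z) * gc t)
      = z * Complex.exp ((x:ℂ)/z) * (∫ t in a..x, Complex.exp (-(t:ℂ)/z) * gc t)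
        - z * ∫ t in a..x, gc t := by
  set G : ℝ → ℂ := fun s => ∫ t in a..s, Complex.exp (-(t:ℂ)/z) * gc t with hGdef
  have hcont1 : Continuous (fun t : ℝ => Complex.exp (-(t:ℂ)/z) * gc t) := by
    continuity
  have hG : Continuous G :=
    intervalIntegral.continuous_primitive (fun u v => hcont1.intervalIntegrable u v) a
  have hGd : ∀ s : ℝ, HasDerivAt G (Complex.exp (-(s:ℂ)/z) * gc s) s := by
    intro s
    exact intervalIntegral.integral_hasDerivAt_right (hcont1.intervalIntegrable a s)
      hcont1.stronglyMeasurable.stronglyMeasurableAtFilter hcont1.continuousAt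
  have hexp : ∀ s : ℝ, HasDerivAt (fun s : ℝ => Complex.exp ((s:ℂ)/z))
      (Complex.exp ((s:ℂ)/z) * (1/z)) s := by
    intro s
    exact (((hasDerivAt_id ((s:ℝ):ℂ)).div_const z).cexp).comp_ofReal
  have hJ : ∀ s : ℝ, HasDerivAt (fun s : ℝ => ∫ t in a..s, gc t) (gc s) s := by
    intro s
    exact intervalIntegral.integral_hasDerivAt_right (hgc.intervalIntegrable a s)
      hgc.stronglyMeasurable.stronglyMeasurableAtFilter hgc.continuousAt
  have hderiv : ∀ s ∈ Set.uIcc a x,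
      HasDerivAt (fun s : ℝ => z * Complex.exp ((s:ℂ)/z) * G s - z * ∫ t in a..s, gc t)
        (Complex.exp ((s:ℂ)/z) * G s) s := by
    intro s _
    have h1 := (((hexp s).const_mul z).mul (hGd s)).sub ((hJ s).const_mul z)
    refine h1.congr_deriv ?_
    have he : Complex.exp ((s:ℂ)/z) * Complex.exp (-(s:ℂ)/z) = 1 := by
      rw [← Complex.exp_add, show (s:ℂ)/z + -(s:ℂ)/z = 0 by ring, Complex.exp_zero]
    have h2 : z * cexp ((s:ℂ)/z) * (cexp (-(s:ℂ)/z) * gc s) = z * gc s := by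
      rw [mul_assoc, ← mul_assoc (cexp ((s:ℂ)/z)), he, one_mul]
    rw [h2]
    field_simp
    ring
  have hint : IntervalIntegrable (fun s : ℝ => Complex.exp ((s:ℂ)/z) * G s) volume a x := by
    exact ((Continuous.cexp (by continuity)).mul hG).intervalIntegrable a x
  have := intervalIntegral.integral_eq_sub_of_hasDerivAt hderiv hint
  rw [this]
  simp [hGdef]


lemma res_formula (a b : ℝ) (hab : a < b)
    (g : C(Set.Icc a b, ℂ))
    (Res : ℂ → C(Set.Icc a b, ℂ) → C(Set.Icc a b, ℂ))
    (hRes : ∀ z : ℂ, z ≠ 0 → ∀ u : C(Set.Icc a b, ℂ), ∀ x : Set.Icc a b,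
      z * Res z u x - (∫ t in a..(x : ℝ), Set.IccExtend hab.le (⇑(Res z u)) t) = u x)
    {z : ℂ} (hz : z ≠ 0) (x : Set.Icc a b) :
    Res z g x - g x / z
      = z⁻¹ * z⁻¹ * (Complex.exp (((x:ℝ):ℂ)/z) *
          ∫ t in a..(x:ℝ), Complex.exp (-(t:ℂ)/z) * Set.IccExtend hab.le (⇑g) t) := by
  set gt : ℝ → ℂ := Set.IccExtend hab.le (⇑g) with hgt
  have hgtc : Continuous gt := g.continuous.Icc_extend'
  set G : ℝ → ℂ := fun y => ∫ t in a..y, Complex.exp (-(t:ℂ)/z) * gt t with hGdef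
  have hcont1 : Continuous (fun t : ℝ => Complex.exp (-(t:ℂ)/z) * gt t) :=
    ((Complex.continuous_ofReal.neg.div_const z).cexp).mul hgtc
  have hGc : Continuous G :=
    intervalIntegral.continuous_primitive (fun u v => hcont1.intervalIntegrable u v) a
  set h : ℝ → ℂ := fun y => gt y / z + z⁻¹ * z⁻¹ * (Complex.exp ((y:ℂ)/z) * G y) with hhdef
  have hhc : Continuous h := by
    apply Continuous.add
    · exact hgtc.div_const z
    · exact continuous_const.mul (((Complex.continuous_ofReal.div_const z).cexp).mul hGc)
  -- candidate satisfies the equation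
  have hcand : ∀ y : ℝ, z * h y - (∫ t in a..y, h t) = gt y := by
    intro y
    have hsplit : (∫ t in a..y, h t)
        = (∫ t in a..y, gt t / z)
          + z⁻¹ * z⁻¹ * ∫ s in a..y, Complex.exp ((s:ℂ)/z) * G s := by
      rw [← intervalIntegral.integral_const_mul, ← intervalIntegral.integral_add (f := fun t => gt t / z)
        (g := fun s => z⁻¹ * z⁻¹ * (Complex.exp ((s:ℂ)/z) * G s))
        ((hgtc.div_const z).intervalIntegrable a y)
        ((continuous_const.mul (((Complex.continuous_ofReal.div_const z).cexp).mul hGc)).intervalIntegrable a y)]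
    rw [hsplit, volterra_key a y hz hgtc]
    have e1 : ∫ t in a..y, gt t / z = z⁻¹ * ∫ t in a..y, gt t := by
      rw [← intervalIntegral.integral_const_mul]
      simp [div_eq_inv_mul]
    rw [e1]
    have hzz : z * z⁻¹ = 1 := mul_inv_cancel₀ hz
    have hzz' : z⁻¹ * z = 1 := inv_mul_cancel₀ hz
    simp only [hhdef, hGdef]
    field_simp
    ring
  have huniq : ∀ y ∈ Set.Icc a b, Set.IccExtend hab.le (⇑(Res z g)) y - h y = 0 := by
    apply volterra_uniq hz
    · exact (Continuous.Icc_extend' (Res z g).continuous).sub hhc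
    · intro y hy
      have h1 := hRes z hz g ⟨y, hy⟩
      simp only at h1
      have hR : Set.IccExtend hab.le (⇑(Res z g)) y = Res z g ⟨y, hy⟩ :=
        Set.IccExtend_of_mem hab.le _ hy
      have hgy : gt y = g ⟨y, hy⟩ := Set.IccExtend_of_mem hab.le _ hy
      have h2 := hcand y
      have hint1 : IntervalIntegrable (Set.IccExtend hab.le (⇑(Res z g))) volume a y :=
        ((Continuous.Icc_extend' (Res z g).continuous)).intervalIntegrable a y
      rw [intervalIntegral.integral_sub hint1 (hhc.intervalIntegrable a y)]
      rw [mul_sub, hR]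
      have : (∫ t in a..y, Set.IccExtend hab.le (⇑(Res z g)) t)
          = z * Res z g ⟨y, hy⟩ - g ⟨y, hy⟩ := by
        rw [← h1]; ring
      rw [this]
      have : (∫ t in a..y, h t) = z * h y - gt y := by rw [← h2]; ring
      rw [this, hgy]
      ring
  have hx := huniq x x.2
  have hR : Set.IccExtend hab.le (⇑(Res z g)) (x:ℝ) = Res z g x := by
    rw [Set.IccExtend_of_mem hab.le _ x.2]
  have hgx : gt (x:ℝ) = g x := by
    rw [hgt, Set.IccExtend_of_mem hab.le _ x.2]
  rw [hR] at hx
  have : Res z g x = h (x:ℝ) := by linear_combination hx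
  rw [this, hhdef]
  simp only [hgx]
  ring

/-- with `f(t) = (1/(2πi)) ∮_{|z|=r} z⁻² e^{t/z} F(z) dz`, the
indefinite convolution `∫_a^x f(x−t) g(t) dt` equals
`(1/(2πi)) ∮_{|z|=r} F(z) [((z·id − 𝒥)⁻¹ g)(x) − g(x)/z] dz`,
both circle integrals written via the parametrization `z = r e^{iθ}`. -/
theorem stmt_5 (a b : ℝ) (hab : a < b) (r : ℝ) (hr : 0 < r)
    (g : C(Set.Icc a b, ℂ)) (F : ℂ → ℂ)
    (hF : ContinuousOn F (Metric.sphere (0 : ℂ) r))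
    (Res : ℂ → C(Set.Icc a b, ℂ) → C(Set.Icc a b, ℂ))
    (hRes : ∀ z : ℂ, z ≠ 0 → ∀ u : C(Set.Icc a b, ℂ), ∀ x : Set.Icc a b,
      z * Res z u x - (∫ t in a..(x : ℝ), Set.IccExtend hab.le (⇑(Res z u)) t) = u x) :
    ∀ x : Set.Icc a b,
      (∫ t in a..(x : ℝ),
          (fun τ : ℝ =>
              (2 * (Real.pi : ℂ) * Complex.I)⁻¹ *
                ∫ θ in (0:ℝ)..(2 * Real.pi),
                  (((r : ℂ) * Complex.exp (Complex.I * (θ : ℂ))) ^ 2)⁻¹ *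
                    Complex.exp ((τ : ℂ) / ((r : ℂ) * Complex.exp (Complex.I * (θ : ℂ)))) *
                    F ((r : ℂ) * Complex.exp (Complex.I * (θ : ℂ))) *
                    Complex.I * (r : ℂ) * Complex.exp (Complex.I * (θ : ℂ)))
            ((x : ℝ) - t) * Set.IccExtend hab.le (⇑g) t)
      = (2 * (Real.pi : ℂ) * Complex.I)⁻¹ *
          ∫ θ in (0:ℝ)..(2 * Real.pi),
            F ((r : ℂ) * Complex.exp (Complex.I * (θ : ℂ))) *
              (Res ((r : ℂ) * Complex.exp (Complex.I * (θ : ℂ))) g x -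
                g x / ((r : ℂ) * Complex.exp (Complex.I * (θ : ℂ)))) *
              Complex.I * (r : ℂ) * Complex.exp (Complex.I * (θ : ℂ)) := by
  intro x
  have resform : ∀ {z : ℂ}, z ≠ 0 →
      Res z g x - g x / z
        = z⁻¹ * z⁻¹ * (Complex.exp (((x:ℝ):ℂ)/z) *
            ∫ t in a..(x:ℝ), Complex.exp (-(t:ℂ)/z) * Set.IccExtend hab.le (⇑g) t) :=
    fun {z} hz => res_formula a b hab g Res hRes hz x
  set gt : ℝ → ℂ := Set.IccExtend hab.le (⇑g) with hgt
  have hgtc : Continuous gt := g.continuous.Icc_extend'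
  set z : ℝ → ℂ := fun θ => (r : ℂ) * Complex.exp (Complex.I * (θ : ℂ)) with hzdef
  have hzc : Continuous z := continuous_const.mul ((continuous_const.mul Complex.continuous_ofReal).cexp)
  have hzne : ∀ θ : ℝ, z θ ≠ 0 := fun θ =>
    mul_ne_zero (Complex.ofReal_ne_zero.mpr hr.ne') (Complex.exp_ne_zero _)
  have hmem : ∀ θ : ℝ, z θ ∈ Metric.sphere (0 : ℂ) r := by
    intro θ
    simp only [Metric.mem_sphere, Complex.dist_eq, sub_zero, hzdef]
    rw [norm_mul, Complex.norm_exp]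
    simp [abs_of_pos hr]
  have hFc : Continuous (fun θ : ℝ => F (z θ)) :=
    hF.comp_continuous hzc hmem
  -- the 2-variable integrand
  set f : ℝ → ℝ → ℂ := fun t θ =>
    ((z θ) ^ 2)⁻¹ * Complex.exp ((((x:ℝ) - t : ℝ) : ℂ) / z θ) * F (z θ) *
      Complex.I * (r : ℂ) * Complex.exp (Complex.I * (θ : ℂ)) * gt t with hfdef
  have hfc : Continuous (Function.uncurry f) := by
    have h1 : Continuous fun p : ℝ × ℝ => ((z p.2) ^ 2)⁻¹ :=
      Continuous.inv₀ ((hzc.comp continuous_snd).pow 2) (fun p => pow_ne_zero 2 (hzne p.2))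
    have h2 : Continuous fun p : ℝ × ℝ => Complex.exp ((((x:ℝ) - p.1 : ℝ) : ℂ) / z p.2) :=
      Continuous.cexp <| Continuous.div
        (Complex.continuous_ofReal.comp (continuous_const.sub continuous_fst))
        (hzc.comp continuous_snd) (fun p => hzne p.2)
    have h3 : Continuous fun p : ℝ × ℝ => F (z p.2) := hFc.comp continuous_snd
    have h4 : Continuous fun p : ℝ × ℝ => Complex.exp (Complex.I * ((p.2:ℝ) : ℂ)) :=
      ((continuous_const.mul Complex.continuous_ofReal).cexp).comp continuous_snd
    have h5 : Continuous fun p : ℝ × ℝ => gt p.1 := hgtc.comp continuous_fst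
    exact ((((((h1.mul h2).mul h3).mul continuous_const).mul continuous_const).mul h4).mul h5)
  have hax : a ≤ (x:ℝ) := x.2.1
  have h2pi : (0:ℝ) ≤ 2 * Real.pi := by positivity
  set c : ℂ := (2 * (Real.pi : ℂ) * Complex.I)⁻¹ with hc
  -- Step C : inner integral identity
  have stepC : ∀ θ : ℝ, (∫ t in a..(x:ℝ), f t θ)
      = F (z θ) * (Res (z θ) g x - g x / z θ) * Complex.I * (r:ℂ) *
          Complex.exp (Complex.I * (θ:ℂ)) := by
    intro θ
    have he : ∀ t : ℝ, Complex.exp ((((x:ℝ) - t : ℝ):ℂ) / z θ)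
        = Complex.exp (((x:ℝ):ℂ) / z θ) * Complex.exp (-(t:ℂ) / z θ) := by
      intro t; rw [← Complex.exp_add]; congr 1; push_cast; ring
    have hfeq : ∀ t : ℝ, f t θ
        = ((z θ)^2)⁻¹ * Complex.exp (((x:ℝ):ℂ) / z θ) * F (z θ) * Complex.I * (r:ℂ) *
            Complex.exp (Complex.I * (θ:ℂ)) * (Complex.exp (-(t:ℂ) / z θ) * gt t) := by
      intro t; simp only [hfdef]; rw [he t]; ring
    rw [intervalIntegral.integral_congr (fun t _ => hfeq t),
      intervalIntegral.integral_const_mul, resform (hzne θ), sq, mul_inv]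
    ring
  -- Step B : Fubini
  have hIcc : IntegrableOn (Function.uncurry f)
      ((Set.Icc a (x:ℝ)) ×ˢ (Set.Icc 0 (2 * Real.pi))) volume :=
    hfc.continuousOn.integrableOn_compact (isCompact_Icc.prod isCompact_Icc)
  have hI : Integrable (Function.uncurry f)
      ((volume.restrict (Set.Ioc a (x:ℝ))).prod (volume.restrict (Set.Ioc 0 (2 * Real.pi)))) := by
    rw [Measure.prod_restrict, ← Measure.volume_eq_prod]
    exact hIcc.mono_set (Set.prod_mono Set.Ioc_subset_Icc_self Set.Ioc_subset_Icc_self)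
  have swap : (∫ t in a..(x:ℝ), ∫ θ in (0:ℝ)..(2 * Real.pi), f t θ)
      = ∫ θ in (0:ℝ)..(2 * Real.pi), ∫ t in a..(x:ℝ), f t θ := by
    simp only [intervalIntegral.integral_of_le hax, intervalIntegral.integral_of_le h2pi]
    exact MeasureTheory.integral_integral_swap hI
  -- Step A : pull out the constant and push gt inside
  have stepA : (∫ t in a..(x : ℝ),
      (fun τ : ℝ =>
          c * ∫ θ in (0:ℝ)..(2 * Real.pi),
              ((z θ) ^ 2)⁻¹ * Complex.exp ((τ : ℂ) / z θ) * F (z θ) *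
                Complex.I * (r : ℂ) * Complex.exp (Complex.I * (θ : ℂ)))
        ((x : ℝ) - t) * gt t)
      = c * ∫ t in a..(x:ℝ), ∫ θ in (0:ℝ)..(2 * Real.pi), f t θ := by
    rw [← intervalIntegral.integral_const_mul]
    apply intervalIntegral.integral_congr
    intro t _
    beta_reduce
    rw [mul_assoc, ← intervalIntegral.integral_mul_const]
  calc _ = c * ∫ t in a..(x:ℝ), ∫ θ in (0:ℝ)..(2 * Real.pi), f t θ := stepA
    _ = c * ∫ θ in (0:ℝ)..(2 * Real.pi), ∫ t in a..(x:ℝ), f t θ := by rw [swap]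
    _ = _ := by
        congr 1
        exact intervalIntegral.integral_congr (fun θ _ => stepC θ)
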